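/- Let (Q,ρ) be a directed set of states and f ⊆ Q×Q a deterministic transition. Partition f into f↢ = f ∩ (Q→×Q←), f↣ = f ∩ (Q←×Q→) and f↔ = f \ (f↢ ∪ f↣), and set f⊣ = f↢ ∪ {(q,q) | q ∈ Q has no image under f↢} and f⊢ = f↣ ∪ {(q,q) | q ∈ Q has no image under f↣}. Then f = f⊣ * f↔ * f⊢, where * denotes the gluing composition of transitions. -/
import Mathlib


namespace Planar2DFT

/-- Tape alphabet: input letters plus the two endmarkers `▷` and `◁`. -/
inductive Tape (A : Type) where
  | lend : Tape A
  | rend : Tape A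
  | sym  : A → Tape A

/-- Edges of the transition profile `G(ρ, f)` on vertices `Q × Bool`
(`true` codes direction `+1`, `false` codes `-1`): an edge
`(q, -ρ q) → (r, ρ r)` for every `(q, r) ∈ f`. -/
def ProfileEdge {Q : Type} (ρ : Q → Bool) (f : Set (Q × Q)) :
    Q × Bool → Q × Bool → Prop :=
  fun u v => ∃ p ∈ f, u = (p.1, !ρ p.1) ∧ v = (p.2, ρ p.2)

/-- The extension of a strict order on `Q` to `Q × Bool`:
`(q,i) < (r,j)` iff (`i = -1` and `j = 1`), or (`q < r` and `i = j = 1`),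
or (`q > r` and `i = j = -1`). -/
def ExtLt {Q : Type} (lt : Q → Q → Prop) : Q × Bool → Q × Bool → Prop :=
  fun x y =>
    (x.2 = false ∧ y.2 = true) ∨
    (lt x.1 y.1 ∧ x.2 = true ∧ y.2 = true) ∨
    (lt y.1 x.1 ∧ x.2 = false ∧ y.2 = false)

/-- Planarity of a transition w.r.t. a direction map `ρ` and a strict total
order `lt`: no vertices `u < r < v < s` with an edge between `u` and `v`
(in either direction) and an edge between `r` and `s` (in either direction). -/
def IsPlanar {Q : Type} (ρ : Q → Bool) (lt : Q → Q → Prop) (f : Set (Q × Q)) : Prop :=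
  ¬ ∃ u r v s : Q × Bool, ExtLt lt u r ∧ ExtLt lt r v ∧ ExtLt lt v s ∧
      (ProfileEdge ρ f u v ∨ ProfileEdge ρ f v u) ∧
      (ProfileEdge ρ f r s ∨ ProfileEdge ρ f s r)

/-- Deterministic transition: a partial function. -/
def IsDet {Q : Type} (f : Set (Q × Q)) : Prop :=
  ∀ q r r', (q, r) ∈ f → (q, r') ∈ f → r = r'

/-- Reversible transition: a partial injection. -/
def IsRev {Q : Type} (f : Set (Q × Q)) : Prop :=
  IsDet f ∧ ∀ q q' r, (q, r) ∈ f → (q', r) ∈ f → q = q'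

/-- Edges of the glued graph `C(ρ, f, g)` on `Q × Fin 3`, levels `0, 1, 2`
coding `-1, 0, 1`: the copy of `G(ρ,f)` lives on levels `{0,1}` (side `+1`
corresponding to level `1`) and the copy of `G(ρ,g)` on levels `{1,2}`
(side `+1` corresponding to level `2`). -/
def GlueEdge {Q : Type} (ρ : Q → Bool) (f g : Set (Q × Q)) :
    Q × Fin 3 → Q × Fin 3 → Prop :=
  fun x y =>
    (x.2 ≠ 2 ∧ y.2 ≠ 2 ∧
      ProfileEdge ρ f (x.1, decide (x.2 = 1)) (y.1, decide (y.2 = 1))) ∨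
    (x.2 ≠ 0 ∧ y.2 ≠ 0 ∧
      ProfileEdge ρ g (x.1, decide (x.2 = 2)) (y.1, decide (y.2 = 2)))

/-- Gluing composition `f * g` of transitions: `(q, r) ∈ f * g` iff there is a
directed path from `(q, -ρ q)` to `(r, ρ r)` in the glued graph `C(ρ, f, g)`. -/
def glue {Q : Type} (ρ : Q → Bool) (f g : Set (Q × Q)) : Set (Q × Q) :=
  {p | Relation.ReflTransGen (GlueEdge ρ f g)
        (p.1, if ρ p.1 then (0 : Fin 3) else 2)
        (p.2, if ρ p.2 then (2 : Fin 3) else 0)}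

/-- The identity transition, unit of the gluing composition. -/
def idRel (Q : Type) : Set (Q × Q) := {p | p.1 = p.2}

/-- Iterated gluing powers of a transition, with `glpow ρ f 0 = idRel Q`. -/
def glpow {Q : Type} (ρ : Q → Bool) (f : Set (Q × Q)) : ℕ → Set (Q × Q)
  | 0 => idRel Q
  | n + 1 => glue ρ (glpow ρ f n) f

/-- A configuration of a two-way machine: the tape content to the left of the
head, the current state, and the tape content to the right of the head. -/
abbrev Config (Q A : Type) := List (Tape A) × Q × List (Tape A)

/-- The tape encoding `▷ u ◁` of an input word `u`. -/
def tapeOf {A : Type} (u : List A) : List (Tape A) :=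
  Tape.lend :: (u.map Tape.sym ++ [Tape.rend])

/-- A two-way (nondeterministic) finite transducer. -/
structure TwoWayTransducer (Q A B : Type) where
  ρ : Q → Bool
  init : Q
  init_fwd : ρ init = true
  final : Set Q
  δ : Tape A → Set (Q × List B × Q)

namespace TwoWayTransducer

variable {Q A B : Type}

/-- The transitions `⌊δ⌋(a)` of the underlying automaton. -/
def rel (T : TwoWayTransducer Q A B) (a : Tape A) : Set (Q × Q) :=
  {p | ∃ w, (p.1, w, p.2) ∈ T.δ a}

def Deterministic (T : TwoWayTransducer Q A B) : Prop :=
  ∀ a, IsDet (T.rel a)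

def Reversible (T : TwoWayTransducer Q A B) : Prop :=
  ∀ a, IsRev (T.rel a)

def Planar (T : TwoWayTransducer Q A B) : Prop :=
  ∃ lt : Q → Q → Prop, IsStrictTotalOrder Q lt ∧
    ∀ a : A, IsPlanar T.ρ lt (T.rel (Tape.sym a))

/-- One step of the two-way transducer, labelled by the output word. -/
def Step (T : TwoWayTransducer Q A B) (c : Config Q A) (w : List B)
    (c' : Config Q A) : Prop :=
  ∃ a u v q r, (q, w, r) ∈ T.δ a ∧
    ((T.ρ q = true ∧ T.ρ r = true ∧ c = (u, q, a :: v) ∧ c' = (u ++ [a], r, v)) ∨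
     (T.ρ q = true ∧ T.ρ r = false ∧ c = (u, q, a :: v) ∧ c' = (u, r, a :: v)) ∨
     (T.ρ q = false ∧ T.ρ r = false ∧ c = (u ++ [a], q, v) ∧ c' = (u, r, a :: v)) ∨
     (T.ρ q = false ∧ T.ρ r = true ∧ c = (u ++ [a], q, v) ∧ c' = (u ++ [a], r, v)))

/-- Multi-step runs, accumulating the concatenated output. -/
inductive Run (T : TwoWayTransducer Q A B) : Config Q A → List B → Config Q A → Prop
  | refl (c : Config Q A) : Run T c [] c
  | step {c₁ w₁ c₂ w₂ c₃} : Run T c₁ w₁ c₂ → T.Step c₂ w₂ c₃ → Run T c₁ (w₁ ++ w₂) c₃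

/-- The pair `(u, v)` is realized by `T`. -/
def Realizes (T : TwoWayTransducer Q A B) (u : List A) (v : List B) : Prop :=
  ∃ qf ∈ T.final, T.Run ([], T.init, tapeOf u) v (tapeOf u, qf, [])

/-- `T` computes the partial function `f`. -/
def Computes (T : TwoWayTransducer Q A B) (f : List A → Option (List B)) : Prop :=
  ∀ u v, f u = some v ↔ T.Realizes u v

end TwoWayTransducer

/-- Membership in the least submonoid of `B(Q,ρ)` containing the transitions
`⌊δ⌋(a)` for the input letters `a`. -/
inductive InBehav {Q A B : Type} (T : TwoWayTransducer Q A B) : Set (Q × Q) → Prop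
  | one : InBehav T (idRel Q)
  | gen (a : A) : InBehav T (T.rel (Tape.sym a))
  | mul {f g} : InBehav T f → InBehav T g → InBehav T (glue T.ρ f g)

/-- The behaviour monoid `B(T)` is aperiodic. -/
def ApBehav {Q A B : Type} (T : TwoWayTransducer Q A B) : Prop :=
  ∃ n : ℕ, ∀ f, InBehav T f → glpow T.ρ f (n + 1) = glpow T.ρ f n

/-- A first-order transduction: a partial function computed by some
deterministic two-way transducer whose behaviour monoid is aperiodic. -/
def IsFOTransduction {A B : Type} (f : List A → Option (List B)) : Prop :=
  ∃ (n : ℕ) (T : TwoWayTransducer (Fin n) A B),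
    T.Deterministic ∧ ApBehav T ∧ T.Computes f

/-- A two-way (nondeterministic) finite automaton. -/
structure TwoWayAutomaton (Q A : Type) where
  ρ : Q → Bool
  init : Q
  init_fwd : ρ init = true
  final : Set Q
  δ : Tape A → Set (Q × Q)

namespace TwoWayAutomaton

variable {Q A : Type}

def Deterministic (M : TwoWayAutomaton Q A) : Prop := ∀ a, IsDet (M.δ a)

def Reversible (M : TwoWayAutomaton Q A) : Prop := ∀ a, IsRev (M.δ a)

def Planar (M : TwoWayAutomaton Q A) : Prop :=
  ∃ lt : Q → Q → Prop, IsStrictTotalOrder Q lt ∧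
    ∀ a : A, IsPlanar M.ρ lt (M.δ (Tape.sym a))

/-- One step of the two-way automaton. -/
def Step (M : TwoWayAutomaton Q A) (c c' : Config Q A) : Prop :=
  ∃ a u v q r, (q, r) ∈ M.δ a ∧
    ((M.ρ q = true ∧ M.ρ r = true ∧ c = (u, q, a :: v) ∧ c' = (u ++ [a], r, v)) ∨
     (M.ρ q = true ∧ M.ρ r = false ∧ c = (u, q, a :: v) ∧ c' = (u, r, a :: v)) ∨
     (M.ρ q = false ∧ M.ρ r = false ∧ c = (u ++ [a], q, v) ∧ c' = (u, r, a :: v)) ∨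
     (M.ρ q = false ∧ M.ρ r = true ∧ c = (u ++ [a], q, v) ∧ c' = (u ++ [a], r, v)))

def Accepts (M : TwoWayAutomaton Q A) (u : List A) : Prop :=
  ∃ qf ∈ M.final, Relation.ReflTransGen M.Step
    ([], M.init, tapeOf u) (tapeOf u, qf, [])

def Language (M : TwoWayAutomaton Q A) : Set (List A) := {u | M.Accepts u}

end TwoWayAutomaton

/-- The underlying automaton `⌊T⌋` of a transducer `T`. -/
def forget {Q A B : Type} (T : TwoWayTransducer Q A B) : TwoWayAutomaton Q A :=
  { ρ := T.ρ, init := T.init, init_fwd := T.init_fwd, final := T.final,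
    δ := fun a => T.rel a }

/-- Star-free languages: the smallest class containing all finite languages
and closed under finite union, complement and concatenation. -/
inductive StarFree {A : Type} : Set (List A) → Prop
  | of_finite (L : Set (List A)) : L.Finite → StarFree L
  | union {L M : Set (List A)} : StarFree L → StarFree M → StarFree (L ∪ M)
  | compl {L : Set (List A)} : StarFree L → StarFree Lᶜ
  | concat {L M : Set (List A)} : StarFree L → StarFree M →
      StarFree {w | ∃ u ∈ L, ∃ v ∈ M, w = u ++ v}

/-- A (total, deterministic) sequential transducer. -/
structure SeqTransducer (Q A B : Type) where
  init : Q
  next : A → Q → Q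
  out : A → Q → List B
  fin : Q → List B

namespace SeqTransducer

variable {Q A B : Type}

/-- Running a sequential transducer on a word from a state: final state and
produced output. -/
def run (T : SeqTransducer Q A B) : List A → Q → Q × List B
  | [], q => (q, [])
  | a :: w, q =>
      let p := run T w (T.next a q)
      (p.1, T.out a q ++ p.2)

/-- The (total) sequential function computed by a sequential transducer. -/
def fn (T : SeqTransducer Q A B) (w : List A) : List B :=
  (T.run w T.init).2 ++ T.fin (T.run w T.init).1

end SeqTransducer

/-- Membership in the transition monoid of a sequential transducer, i.e. the
monoid of functions `Q → Q` generated by the `∂₁(a)`. -/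
inductive SeqGen {Q A B : Type} (T : SeqTransducer Q A B) : (Q → Q) → Prop
  | id : SeqGen T id
  | gen (a : A) : SeqGen T (T.next a)
  | comp {h h'} : SeqGen T h → SeqGen T h' → SeqGen T (h ∘ h')

/-- A sequential transducer is aperiodic when its transition monoid is. -/
def SeqTransducer.Aperiodic {Q A B : Type} (T : SeqTransducer Q A B) : Prop :=
  ∃ n : ℕ, ∀ h, SeqGen T h → h^[n + 1] = h^[n]


/-- `f↢ = f ∩ (Q→ × Q←)`. -/
def partRL {Q : Type} (ρ : Q → Bool) (f : Set (Q × Q)) : Set (Q × Q) :=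
  {p ∈ f | ρ p.1 = true ∧ ρ p.2 = false}

/-- `f↣ = f ∩ (Q← × Q→)`. -/
def partLR {Q : Type} (ρ : Q → Bool) (f : Set (Q × Q)) : Set (Q × Q) :=
  {p ∈ f | ρ p.1 = false ∧ ρ p.2 = true}

/-- `f↔ = f \ (f↢ ∪ f↣)`. -/
def partKeep {Q : Type} (ρ : Q → Bool) (f : Set (Q × Q)) : Set (Q × Q) :=
  f \ (partRL ρ f ∪ partLR ρ f)

/-- `f⊣ = f↢ ∪ {(q,q) | q has no image under f↢}`. -/
def partDashv {Q : Type} (ρ : Q → Bool) (f : Set (Q × Q)) : Set (Q × Q) :=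
  partRL ρ f ∪ {p | p.1 = p.2 ∧ ¬ ∃ r, (p.1, r) ∈ partRL ρ f}

/-- `f⊢ = f↣ ∪ {(q,q) | q has no image under f↣}`. -/
def partVdash {Q : Type} (ρ : Q → Bool) (f : Set (Q × Q)) : Set (Q × Q) :=
  partLR ρ f ∪ {p | p.1 = p.2 ∧ ¬ ∃ r, (p.1, r) ∈ partLR ρ f}

section Aux
variable {Q : Type}

lemma profileEdge_iff {ρ : Q → Bool} {f : Set (Q × Q)} {u v : Q × Bool} :
    ProfileEdge ρ f u v ↔ (u.1, v.1) ∈ f ∧ u.2 = !ρ u.1 ∧ v.2 = ρ v.1 := by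
  constructor
  · rintro ⟨p, hp, rfl, rfl⟩; exact ⟨hp, rfl, rfl⟩
  · rintro ⟨h, h1, h2⟩
    exact ⟨(u.1, v.1), h, by rw [Prod.ext_iff]; exact ⟨rfl, h1⟩,
      by rw [Prod.ext_iff]; exact ⟨rfl, h2⟩⟩

lemma glueEdge_iff {ρ : Q → Bool} {F G : Set (Q × Q)} {x y : Q × Fin 3} :
    GlueEdge ρ F G x y ↔
      (x.2 ≠ 2 ∧ y.2 ≠ 2 ∧ (x.1, y.1) ∈ F ∧
        decide (x.2 = 1) = !ρ x.1 ∧ decide (y.2 = 1) = ρ y.1) ∨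
      (x.2 ≠ 0 ∧ y.2 ≠ 0 ∧ (x.1, y.1) ∈ G ∧
        decide (x.2 = 2) = !ρ x.1 ∧ decide (y.2 = 2) = ρ y.1) := by
  unfold GlueEdge
  rw [profileEdge_iff, profileEdge_iff]


lemma fin3cases (c : Fin 3) : c = 0 ∨ c = 1 ∨ c = 2 := by omega

end Aux
section Aux2
variable {Q : Type}

lemma inner_sub {ρ : Q → Bool} {f : Set (Q × Q)} {q r : Q}
    (h : (q, r) ∈ glue ρ (partDashv ρ f) (partKeep ρ f)) :
    (q, r) ∈ f ∧ ¬(ρ q = false ∧ ρ r = true) := by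
  have h' : Relation.ReflTransGen (GlueEdge ρ (partDashv ρ f) (partKeep ρ f))
      (q, if ρ q then (0 : Fin 3) else 2) (r, if ρ r then (2 : Fin 3) else 0) := h
  by_cases hq : ρ q = true
  · have key : ∀ x : Q × Fin 3,
        Relation.ReflTransGen (GlueEdge ρ (partDashv ρ f) (partKeep ρ f))
          (q, if ρ q then (0 : Fin 3) else 2) x →
        x = (q, 0) ∨ x = (q, 1) ∨
          ((q, x.1) ∈ f ∧ ((ρ x.1 = false ∧ x.2 = 0) ∨ (ρ x.1 = true ∧ x.2 = 2))) := by
      intro x hx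
      induction hx with
      | refl => left; simp [hq]
      | @tail b c hb e ih =>
        obtain ⟨b1, b2⟩ := b
        obtain ⟨c1, c2⟩ := c
        rw [glueEdge_iff] at e
        dsimp only at e ih ⊢
        simp only [Prod.mk.injEq] at ih ⊢
        rcases ih with ⟨rfl, rfl⟩ | ⟨rfl, rfl⟩ | ⟨hqb, hbc⟩
        · -- b = (q, 0)
          rcases e with ⟨_, hy2, hmem, hsd, htd⟩ | ⟨hx0, _, _, _, _⟩
          · rcases hmem with ⟨hfm, _, hc1⟩ | ⟨heq, _⟩
            · rw [hc1] at htd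
              simp only [decide_eq_false_iff_not] at htd
              right; right
              exact ⟨hfm, Or.inl ⟨hc1, by omega⟩⟩
            · have heq' : b1 = c1 := heq
              rw [← heq', hq] at htd
              simp only [decide_eq_true_eq] at htd
              right; left; exact ⟨heq'.symm, htd⟩
          · simp at hx0
        · -- b = (q, 1)
          rcases e with ⟨_, _, _, hsd, _⟩ | ⟨_, hy0, hmem, hsd, htd⟩
          · rw [hq] at hsd; simp at hsd
          · obtain ⟨hfm, hnm⟩ := hmem
            have hc1 : ρ c1 = true := by
              by_contra hc
              simp only [Bool.not_eq_true] at hc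
              exact hnm (Or.inl ⟨hfm, hq, hc⟩)
            rw [hc1] at htd
            simp only [decide_eq_true_eq] at htd
            right; right
            exact ⟨hfm, Or.inr ⟨hc1, htd⟩⟩
        · -- dead ends
          rcases hbc with ⟨hb1, rfl⟩ | ⟨hb1, rfl⟩
          · rcases e with ⟨_, _, _, hsd, _⟩ | ⟨hx0, _, _, _, _⟩
            · rw [hb1] at hsd; simp at hsd
            · simp at hx0
          · rcases e with ⟨hx2, _, _, _, _⟩ | ⟨_, _, _, hsd, _⟩
            · simp at hx2
            · rw [hb1] at hsd; simp at hsd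
    by_cases hr : ρ r = true
    · have := key (r, 2) (by simpa [hr] using h')
      simp only [Prod.mk.injEq] at this
      rcases this with ⟨_, h2⟩ | ⟨_, h2⟩ | ⟨h1, h2⟩
      · exact absurd h2 (by decide)
      · exact absurd h2 (by decide)
      · exact ⟨h1, by simp [hq]⟩
    · simp only [Bool.not_eq_true] at hr
      have := key (r, 0) (by simpa [hr] using h')
      simp only [Prod.mk.injEq] at this
      rcases this with ⟨rfl, _⟩ | ⟨_, h2⟩ | ⟨h1, h2⟩
      · rw [hq] at hr; exact absurd hr (by decide)
      · exact absurd h2 (by decide)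
      · exact ⟨h1, by simp [hr]⟩
  · simp only [Bool.not_eq_true] at hq
    have key : ∀ x : Q × Fin 3,
        Relation.ReflTransGen (GlueEdge ρ (partDashv ρ f) (partKeep ρ f))
          (q, if ρ q then (0 : Fin 3) else 2) x →
        x = (q, 2) ∨ ((q, x.1) ∈ f ∧ ρ x.1 = false ∧ (x.2 = 1 ∨ x.2 = 0)) := by
      intro x hx
      induction hx with
      | refl => left; simp [hq]
      | @tail b c hb e ih =>
        obtain ⟨b1, b2⟩ := b
        obtain ⟨c1, c2⟩ := c
        rw [glueEdge_iff] at e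
        dsimp only at e ih ⊢
        simp only [Prod.mk.injEq] at ih ⊢
        rcases ih with ⟨rfl, rfl⟩ | ⟨hqb, hb1, hbc⟩
        · rcases e with ⟨hx2, _, _, _, _⟩ | ⟨_, hy0, hmem, hsd, htd⟩
          · simp at hx2
          · obtain ⟨hfm, hnm⟩ := hmem
            have hc1 : ρ c1 = false := by
              by_contra hc
              simp only [Bool.not_eq_false] at hc
              exact hnm (Or.inr ⟨hfm, hq, hc⟩)
            rw [hc1] at htd
            simp only [decide_eq_false_iff_not] at htd
            right
            exact ⟨hfm, hc1, by omega⟩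
        · rcases hbc with rfl | rfl
          · rcases e with ⟨_, hy2, hmem, hsd, htd⟩ | ⟨_, _, _, hsd, _⟩
            · rcases hmem with ⟨_, hbt, _⟩ | ⟨heq, _⟩
              · rw [hb1] at hbt; exact absurd hbt (by decide)
              · have heq' : b1 = c1 := heq
                subst heq'
                rw [hb1] at htd
                simp only [decide_eq_false_iff_not] at htd
                right
                exact ⟨hqb, hb1, by omega⟩
            · rw [hb1] at hsd; simp at hsd
          · rcases e with ⟨_, _, _, hsd, _⟩ | ⟨hx0, _, _, _, _⟩
            · rw [hb1] at hsd; simp at hsd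
            · simp at hx0
    by_cases hr : ρ r = true
    · have := key (r, 2) (by simpa [hr] using h')
      simp only [Prod.mk.injEq] at this
      rcases this with ⟨rfl, _⟩ | ⟨_, h2, _⟩
      · rw [hq] at hr; exact absurd hr (by decide)
      · rw [hr] at h2; exact absurd h2 (by decide)
    · simp only [Bool.not_eq_true] at hr
      have := key (r, 0) (by simpa [hr] using h')
      simp only [Prod.mk.injEq] at this
      rcases this with ⟨_, h2⟩ | ⟨h1, _, _⟩
      · exact absurd h2 (by decide)
      · exact ⟨h1, by simp [hr]⟩

end Aux2
section Aux3
variable {Q : Type}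

lemma outer_sub {ρ : Q → Bool} {f : Set (Q × Q)} {q r : Q}
    (h : (q, r) ∈ glue ρ (glue ρ (partDashv ρ f) (partKeep ρ f)) (partVdash ρ f)) :
    (q, r) ∈ f := by
  have h' : Relation.ReflTransGen
      (GlueEdge ρ (glue ρ (partDashv ρ f) (partKeep ρ f)) (partVdash ρ f))
      (q, if ρ q then (0 : Fin 3) else 2) (r, if ρ r then (2 : Fin 3) else 0) := h
  by_cases hq : ρ q = true
  · have key : ∀ x : Q × Fin 3,
        Relation.ReflTransGen
          (GlueEdge ρ (glue ρ (partDashv ρ f) (partKeep ρ f)) (partVdash ρ f))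
          (q, if ρ q then (0 : Fin 3) else 2) x →
        x = (q, 0) ∨ ((q, x.1) ∈ f ∧
          ((ρ x.1 = false ∧ x.2 = 0) ∨ (ρ x.1 = true ∧ (x.2 = 1 ∨ x.2 = 2)))) := by
      intro x hx
      induction hx with
      | refl => left; simp [hq]
      | @tail b c hb e ih =>
        obtain ⟨b1, b2⟩ := b
        obtain ⟨c1, c2⟩ := c
        rw [glueEdge_iff] at e
        dsimp only at e ih ⊢
        simp only [Prod.mk.injEq] at ih ⊢
        rcases ih with ⟨rfl, rfl⟩ | ⟨hqb, hbc⟩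
        · -- b = (q, 0)  (q renamed to b1)
          rcases e with ⟨_, hy2, hmem, hsd, htd⟩ | ⟨hx0, _, _, _, _⟩
          · obtain ⟨hfm, _⟩ := inner_sub hmem
            by_cases hc1 : ρ c1 = true
            · rw [hc1] at htd
              simp only [decide_eq_true_eq] at htd
              right; exact ⟨hfm, Or.inr ⟨hc1, Or.inl htd⟩⟩
            · simp only [Bool.not_eq_true] at hc1
              rw [hc1] at htd
              simp only [decide_eq_false_iff_not] at htd
              right; exact ⟨hfm, Or.inl ⟨hc1, by omega⟩⟩
          · simp at hx0
        · rcases hbc with ⟨hb1, rfl⟩ | ⟨hb1, rfl | rfl⟩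
          · -- (x1, 0), backward: dead
            rcases e with ⟨_, _, _, hsd, _⟩ | ⟨hx0, _, _, _, _⟩
            · rw [hb1] at hsd; simp at hsd
            · simp at hx0
          · -- (x1, 1), forward
            rcases e with ⟨_, _, _, hsd, _⟩ | ⟨_, _, hmem, hsd, htd⟩
            · rw [hb1] at hsd; simp at hsd
            · rcases hmem with ⟨_, hbt, _⟩ | ⟨heq, _⟩
              · rw [hb1] at hbt; exact absurd hbt (by decide)
              · have heq' : b1 = c1 := heq
                rw [← heq', hb1] at htd
                simp only [decide_eq_true_eq] at htd
                right
                exact ⟨heq' ▸ hqb, Or.inr ⟨heq' ▸ hb1, Or.inr htd⟩⟩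
          · -- (x1, 2), forward: dead
            rcases e with ⟨hx2, _, _, _, _⟩ | ⟨_, _, _, hsd, _⟩
            · simp at hx2
            · rw [hb1] at hsd; simp at hsd
    by_cases hr : ρ r = true
    · have := key (r, 2) (by simpa [hr] using h')
      simp only [Prod.mk.injEq] at this
      rcases this with ⟨_, h2⟩ | ⟨h1, _⟩
      · exact absurd h2 (by decide)
      · exact h1
    · simp only [Bool.not_eq_true] at hr
      have := key (r, 0) (by simpa [hr] using h')
      simp only [Prod.mk.injEq] at this
      rcases this with ⟨rfl, _⟩ | ⟨h1, _⟩
      · rw [hq] at hr; exact absurd hr (by decide)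
      · exact h1
  · simp only [Bool.not_eq_true] at hq
    have key : ∀ x : Q × Fin 3,
        Relation.ReflTransGen
          (GlueEdge ρ (glue ρ (partDashv ρ f) (partKeep ρ f)) (partVdash ρ f))
          (q, if ρ q then (0 : Fin 3) else 2) x →
        x = (q, 2) ∨ x = (q, 1) ∨ ((q, x.1) ∈ f ∧
          ((ρ x.1 = true ∧ x.2 = 2) ∨ (ρ x.1 = false ∧ x.2 = 0))) := by
      intro x hx
      induction hx with
      | refl => left; simp [hq]
      | @tail b c hb e ih =>
        obtain ⟨b1, b2⟩ := b
        obtain ⟨c1, c2⟩ := c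
        rw [glueEdge_iff] at e
        dsimp only at e ih ⊢
        simp only [Prod.mk.injEq] at ih ⊢
        rcases ih with ⟨rfl, rfl⟩ | ⟨rfl, rfl⟩ | ⟨hqb, hbc⟩
        · -- b = (q, 2)
          rcases e with ⟨hx2, _, _, _, _⟩ | ⟨_, hy0, hmem, hsd, htd⟩
          · simp at hx2
          · rcases hmem with ⟨hfm, _, hc1⟩ | ⟨heq, _⟩
            · rw [hc1] at htd
              simp only [decide_eq_true_eq] at htd
              right; right; exact ⟨hfm, Or.inl ⟨hc1, htd⟩⟩
            · have heq' : b1 = c1 := heq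
              rw [← heq', hq] at htd
              simp only [decide_eq_false_iff_not] at htd
              right; left; exact ⟨heq'.symm, by omega⟩
        · -- b = (q, 1)
          rcases e with ⟨_, hy2, hmem, hsd, htd⟩ | ⟨_, _, _, hsd, _⟩
          · obtain ⟨hfm, hdir⟩ := inner_sub hmem
            have hc1 : ρ c1 = false := by
              by_contra hc
              simp only [Bool.not_eq_false] at hc
              exact hdir ⟨hq, hc⟩
            rw [hc1] at htd
            simp only [decide_eq_false_iff_not] at htd
            right; right
            exact ⟨hfm, Or.inr ⟨hc1, by omega⟩⟩
          · rw [hq] at hsd; simp at hsd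
        · rcases hbc with ⟨hb1, rfl⟩ | ⟨hb1, rfl⟩
          · -- (x1, 2) forward: dead
            rcases e with ⟨hx2, _, _, _, _⟩ | ⟨_, _, _, hsd, _⟩
            · simp at hx2
            · rw [hb1] at hsd; simp at hsd
          · -- (x1, 0) backward: dead
            rcases e with ⟨_, _, _, hsd, _⟩ | ⟨hx0, _, _, _, _⟩
            · rw [hb1] at hsd; simp at hsd
            · simp at hx0
    by_cases hr : ρ r = true
    · have := key (r, 2) (by simpa [hr] using h')
      simp only [Prod.mk.injEq] at this
      rcases this with ⟨rfl, _⟩ | ⟨_, h2⟩ | ⟨h1, _⟩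
      · rw [hq] at hr; exact absurd hr (by decide)
      · exact absurd h2 (by decide)
      · exact h1
    · simp only [Bool.not_eq_true] at hr
      have := key (r, 0) (by simpa [hr] using h')
      simp only [Prod.mk.injEq] at this
      rcases this with ⟨_, h2⟩ | ⟨_, h2⟩ | ⟨h1, _⟩
      · exact absurd h2 (by decide)
      · exact absurd h2 (by decide)
      · exact h1

end Aux3
section Aux4
variable {Q : Type}

lemma ite_t {ρ : Q → Bool} {q : Q} (hq : ρ q = true) {a b : Fin 3} :
    (if ρ q then a else b) = a := by rw [hq]; rfl

lemma ite_f {ρ : Q → Bool} {q : Q} (hq : ρ q = false) {a b : Fin 3} :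
    (if ρ q then a else b) = b := by rw [hq]; rfl

lemma mem_outer {ρ : Q → Bool} {f : Set (Q × Q)} (hf : IsDet f) {q r : Q}
    (h : (q, r) ∈ f) :
    (q, r) ∈ glue ρ (glue ρ (partDashv ρ f) (partKeep ρ f)) (partVdash ρ f) := by
  by_cases hq : ρ q = true
  · by_cases hr : ρ r = true
    · -- forward-forward: via partKeep
      have hKeep : (q, r) ∈ partKeep ρ f := by
        refine ⟨h, ?_⟩
        rintro (⟨_, _, h2⟩ | ⟨_, h1, _⟩)
        · simp [hr] at h2
        · simp [hq] at h1
      have hA : (q, q) ∈ partDashv ρ f := by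
        refine Or.inr ⟨rfl, ?_⟩
        rintro ⟨s, hs, _, hsF⟩
        have hsr := hf q s r hs h
        subst hsr
        simp [hr] at hsF
      have hC : (r, r) ∈ partVdash ρ f := by
        refine Or.inr ⟨rfl, ?_⟩
        rintro ⟨s, _, hrF, _⟩
        simp [hr] at hrF
      have hg : (q, r) ∈ glue ρ (partDashv ρ f) (partKeep ρ f) := by
        show Relation.ReflTransGen _ (q, if ρ q then (0 : Fin 3) else 2)
          (r, if ρ r then (2 : Fin 3) else 0)
        rw [ite_t hq, ite_t hr]
        refine Relation.ReflTransGen.tail (b := (q, (1 : Fin 3))) (Relation.ReflTransGen.single ?_) ?_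
        · exact Or.inl ⟨by simp, by simp,
            profileEdge_iff.mpr ⟨hA, by simp [hq], by simp [hq]⟩⟩
        · exact Or.inr ⟨by simp, by simp,
            profileEdge_iff.mpr ⟨hKeep, by simp [hq], by simp [hr]⟩⟩
      show Relation.ReflTransGen _ (q, if ρ q then (0 : Fin 3) else 2)
        (r, if ρ r then (2 : Fin 3) else 0)
      rw [ite_t hq, ite_t hr]
      refine Relation.ReflTransGen.tail (b := (r, (1 : Fin 3))) (Relation.ReflTransGen.single ?_) ?_
      · exact Or.inl ⟨by simp, by simp,
          profileEdge_iff.mpr ⟨hg, by simp [hq], by simp [hr]⟩⟩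
      · exact Or.inr ⟨by simp, by simp,
          profileEdge_iff.mpr ⟨hC, by simp [hr], by simp [hr]⟩⟩
    · -- forward-backward: via partRL
      simp only [Bool.not_eq_true] at hr
      have hRL : (q, r) ∈ partRL ρ f := ⟨h, hq, hr⟩
      have hg : (q, r) ∈ glue ρ (partDashv ρ f) (partKeep ρ f) := by
        show Relation.ReflTransGen _ (q, if ρ q then (0 : Fin 3) else 2)
          (r, if ρ r then (2 : Fin 3) else 0)
        rw [ite_t hq, ite_f hr]
        exact Relation.ReflTransGen.single (Or.inl ⟨by simp, by simp,
          profileEdge_iff.mpr ⟨Or.inl hRL, by simp [hq], by simp [hr]⟩⟩)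
      show Relation.ReflTransGen _ (q, if ρ q then (0 : Fin 3) else 2)
        (r, if ρ r then (2 : Fin 3) else 0)
      rw [ite_t hq, ite_f hr]
      exact Relation.ReflTransGen.single (Or.inl ⟨by simp, by simp,
        profileEdge_iff.mpr ⟨hg, by simp [hq], by simp [hr]⟩⟩)
  · simp only [Bool.not_eq_true] at hq
    by_cases hr : ρ r = true
    · -- backward-forward: via partLR
      have hLR : (q, r) ∈ partLR ρ f := ⟨h, hq, hr⟩
      show Relation.ReflTransGen _ (q, if ρ q then (0 : Fin 3) else 2)
        (r, if ρ r then (2 : Fin 3) else 0)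
      rw [ite_f hq, ite_t hr]
      exact Relation.ReflTransGen.single (Or.inr ⟨by simp, by simp,
        profileEdge_iff.mpr ⟨Or.inl hLR, by simp [hq], by simp [hr]⟩⟩)
    · -- backward-backward: via partKeep
      simp only [Bool.not_eq_true] at hr
      have hKeep : (q, r) ∈ partKeep ρ f := by
        refine ⟨h, ?_⟩
        rintro (⟨_, h1, _⟩ | ⟨_, _, h2⟩)
        · simp [hq] at h1
        · simp [hr] at h2
      have hA : (r, r) ∈ partDashv ρ f := by
        refine Or.inr ⟨rfl, ?_⟩
        rintro ⟨s, _, hrT, _⟩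
        simp [hr] at hrT
      have hC : (q, q) ∈ partVdash ρ f := by
        refine Or.inr ⟨rfl, ?_⟩
        rintro ⟨s, hs, _, hsT⟩
        have hsr := hf q s r hs h
        subst hsr
        simp [hr] at hsT
      have hg : (q, r) ∈ glue ρ (partDashv ρ f) (partKeep ρ f) := by
        show Relation.ReflTransGen _ (q, if ρ q then (0 : Fin 3) else 2)
          (r, if ρ r then (2 : Fin 3) else 0)
        rw [ite_f hq, ite_f hr]
        refine Relation.ReflTransGen.tail (b := (r, (1 : Fin 3))) (Relation.ReflTransGen.single ?_) ?_
        · exact Or.inr ⟨by simp, by simp,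
            profileEdge_iff.mpr ⟨hKeep, by simp [hq], by simp [hr]⟩⟩
        · exact Or.inl ⟨by simp, by simp,
            profileEdge_iff.mpr ⟨hA, by simp [hr], by simp [hr]⟩⟩
      show Relation.ReflTransGen _ (q, if ρ q then (0 : Fin 3) else 2)
        (r, if ρ r then (2 : Fin 3) else 0)
      rw [ite_f hq, ite_f hr]
      refine Relation.ReflTransGen.tail (b := (q, (1 : Fin 3))) (Relation.ReflTransGen.single ?_) ?_
      · exact Or.inr ⟨by simp, by simp,
          profileEdge_iff.mpr ⟨hC, by simp [hq], by simp [hq]⟩⟩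
      · exact Or.inl ⟨by simp, by simp,
          profileEdge_iff.mpr ⟨hg, by simp [hq], by simp [hr]⟩⟩

end Aux4
/-- for any deterministic transition `f`,
`f = f⊣ * f↔ * f⊢` for the gluing composition. -/
theorem det_decomposition {Q : Type} [Fintype Q] (ρ : Q → Bool)
    (f : Set (Q × Q)) (hf : IsDet f) :
    f = glue ρ (glue ρ (partDashv ρ f) (partKeep ρ f)) (partVdash ρ f) := by
  apply Set.eq_of_subset_of_subset
  · intro p hp
    obtain ⟨q, r⟩ := p
    exact mem_outer hf hp
  · intro p hp
    obtain ⟨q, r⟩ := p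
    exact outer_sub hp
end Planar2DFT
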